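/- arXiv:2209.00427 — 2 statements merged into one kernel-verified Lean document; each statement's English description precedes it below -/
import Mathlib

section
/- Let η : ℝ → [0,1] be measurable, X a real random variable with continuous CDF of η(X), and for γ ∈ (0,1) define the classifier g_γ(x) = 1 if F(η(x)) ≥ γ and 0 otherwise, where F is the CDF of η(X). Then E[g_γ(X)(1 − 2η(X))] = ∫_γ^1 (1 − 2F⁻¹(u)) du. -/
open MeasureTheory Set

/-- Risk of the rank-thresholded classifier `g_γ = 1{F(η(X)) ≥ γ}`:
`E[g_γ(X)(1 − 2η(X))] = ∫_γ^1 (1 − 2F⁻¹(u)) du`. -/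
theorem stmt4 {Ω : Type*} [MeasurableSpace Ω] (ℙ : Measure Ω) [IsProbabilityMeasure ℙ]
    (X : Ω → ℝ) (hX : Measurable X)
    (η : ℝ → ℝ) (hη : Measurable η) (hη01 : ∀ x, η x ∈ Icc (0:ℝ) 1)
    (F : ℝ → ℝ) (hF : F = fun t => (ℙ {ω | η (X ω) ≤ t}).toReal)
    (hcont : Continuous F)
    (Finv : ℝ → ℝ) (hFinv : Finv = fun p => sInf {x | p ≤ F x})
    (γ : ℝ) (hγ : γ ∈ Ioo (0:ℝ) 1) :
    ∫ ω, (if γ ≤ F (η (X ω)) then (1:ℝ) else 0) * (1 - 2 * η (X ω)) ∂ℙ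
      = ∫ u in Ioo γ 1, (1 - 2 * Finv u) := by
  obtain ⟨hγ0, hγ1⟩ := hγ
  set Y : Ω → ℝ := fun ω => η (X ω) with hY
  have hYm : Measurable Y := hη.comp hX
  set μ : Measure ℝ := Measure.map Y ℙ with hμ
  haveI : IsProbabilityMeasure μ := Measure.isProbabilityMeasure_map hYm.aemeasurable
  -- CDF facts
  have hμIic : ∀ t, μ (Iic t) = ENNReal.ofReal (F t) := by
    intro t
    have : μ (Iic t) = ℙ (Y ⁻¹' Iic t) := Measure.map_apply hYm measurableSet_Iic
    rw [this, hF]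
    simp only [preimage, mem_Iic]
    exact (ENNReal.ofReal_toReal (measure_ne_top _ _)).symm
  have hF0 : ∀ t, 0 ≤ F t := by intro t; rw [hF]; exact ENNReal.toReal_nonneg
  have hF1 : ∀ t, F t ≤ 1 := by
    intro t; rw [hF]
    exact ENNReal.toReal_le_of_le_ofReal zero_le_one (by simpa using prob_le_one)
  have hFmono : Monotone F := by
    intro s t hst
    rw [hF]
    exact ENNReal.toReal_le_toReal (measure_ne_top _ _) (measure_ne_top _ _) |>.mpr
      (measure_mono fun ω (h : η (X ω) ≤ s) => h.trans hst)
  have hFneg : ∀ t, t < 0 → F t = 0 := by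
    intro t ht
    rw [hF]
    have : {ω | η (X ω) ≤ t} = ∅ := by
      ext ω; simp only [mem_setOf_eq, mem_empty_iff_false, iff_false, not_le]
      exact lt_of_lt_of_le ht (hη01 (X ω)).1
    simp [this]
  have hFone : ∀ t, 1 ≤ t → F t = 1 := by
    intro t ht
    rw [hF]
    have : {ω | η (X ω) ≤ t} = univ := by
      ext ω; simp only [mem_setOf_eq, mem_univ, iff_true]
      exact (hη01 (X ω)).2.trans ht
    simp [this]
  -- no atoms
  have hatom : ∀ a : ℝ, μ {a} = 0 := by
    intro a
    have hseq : ∀ n : ℕ, μ {a} ≤ ENNReal.ofReal (F a - F (a - 1/(n+1))) := by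
      intro n
      have hlt : a - 1/(n+1) < a := by
        have : (0:ℝ) < 1/(n+1) := by positivity
        linarith
      have h1 : μ {a} ≤ μ (Ioc (a - 1/(n+1)) a) :=
        measure_mono (fun x hx => by simp_all [mem_Ioc])
      have h2 : μ (Ioc (a - 1/(n+1)) a) = μ (Iic a) - μ (Iic (a - 1/(n+1))) := by
        rw [← Iic_sdiff_Iic, measure_diff (Iic_subset_Iic.mpr hlt.le) measurableSet_Iic.nullMeasurableSet
          (measure_ne_top _ _)]
      rw [h2, hμIic, hμIic, ← ENNReal.ofReal_sub _ (hF0 _)] at h1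
      exact h1
    have htend : Filter.Tendsto (fun n : ℕ => ENNReal.ofReal (F a - F (a - 1/(n+1)))) Filter.atTop (nhds 0) := by
      have h1 : Filter.Tendsto (fun n : ℕ => a - 1/(n+1)) Filter.atTop (nhds a) := by
        have := tendsto_one_div_add_atTop_nhds_zero_nat (𝕜 := ℝ)
        have := (tendsto_const_nhds (x := a) (f := Filter.atTop (α := ℕ))).sub this
        simpa using this
      have h2 : Filter.Tendsto (fun n : ℕ => F a - F (a - 1/(n+1))) Filter.atTop (nhds 0) := by
        have := (tendsto_const_nhds (x := F a) (f := Filter.atTop (α := ℕ))).sub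
          ((hcont.tendsto a).comp h1)
        simpa using this
      have := (ENNReal.continuous_ofReal.tendsto 0).comp h2
      rw [ENNReal.ofReal_zero] at this; exact this
    exact le_antisymm (ge_of_tendsto' htend hseq) zero_le
  -- the threshold c
  set c : ℝ := sInf {x | γ ≤ F x} with hc
  have hSne : {x | γ ≤ F x}.Nonempty := ⟨1, by simp [hFone 1 le_rfl, hγ1.le]⟩
  have hSbd : BddBelow {x | γ ≤ F x} := by
    refine ⟨0, fun x hx => ?_⟩
    by_contra h
    push_neg at h
    have hx' : γ ≤ F x := hx
    rw [hFneg x h] at hx'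
    exact absurd hx' (not_le.mpr hγ0)
  have hSclosed : IsClosed {x | γ ≤ F x} := isClosed_Ici.preimage hcont
  have hcmem : γ ≤ F c := hSclosed.csInf_mem hSne hSbd
  have hc0 : 0 ≤ c := le_csInf hSne (fun x hx => by
    by_contra h
    push_neg at h
    have hx' : γ ≤ F x := hx
    rw [hFneg x h] at hx'
    exact absurd hx' (not_le.mpr hγ0))
  have hc1 : c ≤ 1 := csInf_le hSbd (by simp [hFone 1 le_rfl, hγ1.le])
  have hltc : ∀ t, t < c → F t < γ := by
    intro t ht
    by_contra h
    push_neg at h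
    exact absurd (csInf_le hSbd h) (not_le.mpr ht)
  have hFc : F c = γ := by
    refine le_antisymm ?_ hcmem
    have hseq : ∀ n : ℕ, F (c - 1/(n+1)) ≤ γ := fun n => by
      have : (0:ℝ) < 1/(n+1) := by positivity
      exact (hltc _ (by linarith)).le
    have h1 : Filter.Tendsto (fun n : ℕ => c - 1/(n+1)) Filter.atTop (nhds c) := by
      have := tendsto_one_div_add_atTop_nhds_zero_nat (𝕜 := ℝ)
      have := (tendsto_const_nhds (x := c) (f := Filter.atTop (α := ℕ))).sub this
      simpa using this
    exact le_of_tendsto ((hcont.tendsto c).comp h1) (Filter.Eventually.of_forall hseq)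
  have hSIci : {x | γ ≤ F x} = Ici c := by
    ext x
    constructor
    · exact fun hx => csInf_le hSbd hx
    · exact fun hx => hFc ▸ hFmono hx
  -- Galois correspondence for Finv
  have hSIci' : ∀ u : ℝ, 0 < u → u ≤ 1 → {x | u ≤ F x} = Ici (Finv u) := by
    intro u hu0 hu1
    have hne : {x | u ≤ F x}.Nonempty := ⟨1, by simp [hFone 1 le_rfl, hu1]⟩
    have hbd : BddBelow {x | u ≤ F x} := by
      refine ⟨0, fun x hx => ?_⟩
      by_contra h
      push_neg at h
      have hx' : u ≤ F x := hx
      rw [hFneg x h] at hx'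
      exact absurd hx' (not_le.mpr hu0)
    have hclosed : IsClosed {x | u ≤ F x} := isClosed_Ici.preimage hcont
    have hmem : u ≤ F (sInf {x | u ≤ F x}) := hclosed.csInf_mem hne hbd
    rw [hFinv]
    ext x
    constructor
    · exact fun hx => csInf_le hbd hx
    · exact fun hx => hmem.trans (hFmono hx)
  have hgal : ∀ u : ℝ, 0 < u → u ≤ 1 → ∀ t, Finv u ≤ t ↔ u ≤ F t := by
    intro u hu0 hu1 t
    rw [← mem_Ici, ← hSIci' u hu0 hu1]; rfl
  have hFinv0 : ∀ u, 0 < u → u ≤ 1 → 0 ≤ Finv u := by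
    intro u hu0 hu1
    by_contra h
    push_neg at h
    have := (hgal u hu0 hu1 (Finv u)).mp le_rfl
    rw [hFneg _ h] at this
    exact absurd this (not_le.mpr hu0)
  have hFinv1 : ∀ u, 0 < u → u ≤ 1 → Finv u ≤ 1 :=
    fun u hu0 hu1 => (hgal u hu0 hu1 1).mpr (by rw [hFone 1 le_rfl]; exact hu1)
  -- measures of key sets
  have hμIio : ∀ a, μ (Iio a) = ENNReal.ofReal (F a) := by
    intro a
    rw [measure_congr (Iio_ae_eq_Iic' (hatom a))]
    exact hμIic a
  have hμIoi : ∀ a, μ (Ioi a) = ENNReal.ofReal (1 - F a) := by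
    intro a
    have : Ioi a = (Iic a)ᶜ := by simp
    rw [this, measure_compl measurableSet_Iic (measure_ne_top _ _), hμIic,
      measure_univ, ← ENNReal.ofReal_one, ← ENNReal.ofReal_sub _ (hF0 a)]
  have hμIci : μ (Ici c) = ENNReal.ofReal (1 - γ) := by
    have : Ici c = (Iio c)ᶜ := by simp
    rw [this, measure_compl measurableSet_Iio (measure_ne_top _ _), hμIio, hFc,
      measure_univ, ← ENNReal.ofReal_one, ← ENNReal.ofReal_sub _ hγ0.le]
  -- a.e. boundedness of μ
  have hae : ∀ᵐ y ∂μ, y ∈ Icc (0:ℝ) 1 := by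
    rw [ae_iff]
    have h1 : {y : ℝ | ¬ y ∈ Icc (0:ℝ) 1} = (Icc (0:ℝ) 1)ᶜ := rfl
    rw [h1, hμ, Measure.map_apply hYm measurableSet_Icc.compl]
    have h2 : Y ⁻¹' (Icc (0:ℝ) 1)ᶜ = ∅ := by
      ext ω
      simp only [mem_preimage, mem_compl_iff, mem_empty_iff_false, iff_false, not_not]
      exact hη01 (X ω)
    simp [h2]
  -- finiteness instance
  haveI hfin : IsFiniteMeasure (volume.restrict (Ioo γ 1)) := by
    constructor
    rw [Measure.restrict_apply_univ, Real.volume_Ioo]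
    exact ENNReal.ofReal_lt_top
  -- monotonicity and measurability of Finv on (γ,1)
  have hmono' : MonotoneOn Finv (Ioo γ 1) := by
    intro u hu v hv huv
    have hv0 : 0 < v := hγ0.trans hv.1
    have hu0 : 0 < u := hγ0.trans hu.1
    have hFv : v ≤ F (Finv v) := (hgal v hv0 hv.2.le (Finv v)).mp le_rfl
    exact (hgal u hu0 hu.2.le (Finv v)).mpr (huv.trans hFv)
  have hFinv_aem : AEMeasurable Finv (volume.restrict (Ioo γ 1)) :=
    aemeasurable_restrict_of_monotoneOn measurableSet_Ioo hmono'
  -- tail sets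
  have htail : ∀ t : ℝ, {u | t < Finv u} ∩ Ioo γ 1 = Ioo (max γ (F t)) 1 := by
    intro t
    ext u
    simp only [mem_inter_iff, mem_setOf_eq, mem_Ioo, max_lt_iff]
    constructor
    · rintro ⟨h1, h2, h3⟩
      refine ⟨⟨h2, ?_⟩, h3⟩
      by_contra h
      push_neg at h
      exact absurd ((hgal u (hγ0.trans h2) h3.le t).mpr h) (not_le.mpr h1)
    · rintro ⟨⟨h2, hFt⟩, h3⟩
      refine ⟨?_, h2, h3⟩
      by_contra h
      push_neg at h
      exact absurd ((hgal u (hγ0.trans h2) h3.le t).mp h) (not_le.mpr hFt)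
  have hkey : ∀ t ∈ Ioi (0:ℝ),
      (μ.restrict (Ici c)) {y : ℝ | t < y} = (volume.restrict (Ioo γ 1)) {u | t < Finv u} := by
    intro t _
    rw [Measure.restrict_apply' measurableSet_Ici, Measure.restrict_apply' measurableSet_Ioo,
      htail t]
    have h1 : {y : ℝ | t < y} = Ioi t := rfl
    rw [h1, Real.volume_Ioo]
    rcases lt_or_ge t c with h | h
    · have h2 : Ioi t ∩ Ici c = Ici c :=
        inter_eq_self_of_subset_right (fun x hx => lt_of_lt_of_le h hx)
      rw [h2, hμIci, max_eq_left (hltc t h).le]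
    · have h2 : Ioi t ∩ Ici c = Ioi t :=
        inter_eq_self_of_subset_left (fun x hx => le_trans h (le_of_lt hx))
      rw [h2, hμIoi, max_eq_right (hFc ▸ hFmono h)]
  -- nonnegativity facts
  have hnn1 : 0 ≤ᵐ[μ.restrict (Ici c)] (fun y : ℝ => y) :=
    (ae_restrict_iff' measurableSet_Ici).2 (Filter.Eventually.of_forall (fun y hy => hc0.trans hy))
  have hnn2 : 0 ≤ᵐ[volume.restrict (Ioo γ 1)] Finv :=
    (ae_restrict_iff' measurableSet_Ioo).2 (Filter.Eventually.of_forall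
      (fun u hu => hFinv0 u (hγ0.trans hu.1) hu.2.le))
  -- core equality
  have hcore : ∫ y in Ici c, y ∂μ = ∫ u in Ioo γ 1, Finv u := by
    rw [integral_eq_lintegral_of_nonneg_ae hnn1 measurable_id.aestronglyMeasurable,
      integral_eq_lintegral_of_nonneg_ae hnn2 hFinv_aem.aestronglyMeasurable]
    congr 1
    rw [lintegral_eq_lintegral_meas_lt _ hnn1 measurable_id.aemeasurable,
      lintegral_eq_lintegral_meas_lt _ hnn2 hFinv_aem]
    exact setLIntegral_congr_fun measurableSet_Ioi hkey
  -- integrability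
  have hμint : Integrable (fun y : ℝ => y) (μ.restrict (Ici c)) := by
    refine Integrable.mono' (integrable_const 1) measurable_id.aestronglyMeasurable ?_
    refine ae_restrict_of_ae ?_
    filter_upwards [hae] with y hy
    rw [Real.norm_eq_abs, abs_le]
    exact ⟨by linarith [hy.1], hy.2⟩
  have hvint : Integrable Finv (volume.restrict (Ioo γ 1)) := by
    refine Integrable.mono' (integrable_const 1) hFinv_aem.aestronglyMeasurable ?_
    refine (ae_restrict_iff' measurableSet_Ioo).2 (Filter.Eventually.of_forall fun u hu => ?_)
    rw [Real.norm_eq_abs, abs_le]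
    have h0 := hFinv0 u (hγ0.trans hu.1) hu.2.le
    have h1 := hFinv1 u (hγ0.trans hu.1) hu.2.le
    exact ⟨by linarith, h1⟩
  -- LHS reduction
  have hgm : Measurable ((Ici c).indicator (fun y : ℝ => 1 - 2*y)) :=
    (measurable_const.sub (measurable_const.mul measurable_id)).indicator measurableSet_Ici
  have hLHS : ∫ ω, (if γ ≤ F (η (X ω)) then (1:ℝ) else 0) * (1 - 2 * η (X ω)) ∂ℙ
      = ∫ y in Ici c, (1 - 2*y) ∂μ := by
    have hfun : ∀ y : ℝ, (if γ ≤ F y then (1:ℝ) else 0) * (1 - 2*y)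
        = (Ici c).indicator (fun y => 1 - 2*y) y := by
      intro y
      by_cases h : γ ≤ F y
      · have hy : y ∈ Ici c := by rw [← hSIci]; exact h
        rw [if_pos h, indicator_of_mem hy, one_mul]
      · have hy : y ∉ Ici c := by rw [← hSIci]; exact h
        rw [if_neg h, indicator_of_notMem hy, zero_mul]
    calc ∫ ω, (if γ ≤ F (η (X ω)) then (1:ℝ) else 0) * (1 - 2 * η (X ω)) ∂ℙ
        = ∫ ω, (Ici c).indicator (fun y => 1 - 2*y) (Y ω) ∂ℙ := by
          exact integral_congr_ae (Filter.Eventually.of_forall (fun ω => hfun (η (X ω))))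
      _ = ∫ y, (Ici c).indicator (fun y => 1 - 2*y) y ∂μ :=
          (integral_map hYm.aemeasurable hgm.aestronglyMeasurable).symm
      _ = ∫ y in Ici c, (1 - 2*y) ∂μ := integral_indicator measurableSet_Ici
  rw [hLHS]
  have hsplit1 : ∫ y in Ici c, (1 - 2*y) ∂μ
      = (μ (Ici c)).toReal - 2 * ∫ y in Ici c, y ∂μ := by
    rw [integral_sub (integrable_const 1) (hμint.const_mul 2), setIntegral_const,
      integral_const_mul]
    simp [Measure.real]
  have hsplit2 : ∫ u in Ioo γ 1, (1 - 2 * Finv u)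
      = (volume (Ioo γ 1)).toReal - 2 * ∫ u in Ioo γ 1, Finv u := by
    rw [integral_sub (integrable_const 1) (hvint.const_mul 2), setIntegral_const,
      integral_const_mul]
    simp [ENNReal.toReal_ofReal']
  rw [hsplit1, hsplit2, hcore, hμIci, Real.volume_Ioo]
end

section
/- Continuity of the sublevel probability: let V be a random vector in ℝ^{K+1} such that for every u in a compact set H₀ ⊂ ℝ^{K+1} the law of ⟨u, V⟩ is continuous (atomless). Then the function (u,t) ↦ P(|⟨u,V⟩| ≤ t) is jointly continuous on H₀ × (0,∞), and t ↦ sup_{u ∈ H₀} P(|⟨u,V⟩| ≤ t) is continuous on [0,∞). -/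
open MeasureTheory Set RealInnerProductSpace Filter Topology
open scoped ENNReal

section Aux

variable {Ω : Type*} [MeasurableSpace Ω] {ℙ : Measure Ω} [IsProbabilityMeasure ℙ]

/-- Subadditivity of probabilities, in real form. -/
lemma stmt19_aux_toReal_le {A B C : Set Ω} (h : A ⊆ B ∪ C) :
    (ℙ A).toReal ≤ (ℙ B).toReal + (ℙ C).toReal := by
  rw [← ENNReal.toReal_add (measure_ne_top _ _) (measure_ne_top _ _)]
  exact ENNReal.toReal_mono
    (ENNReal.add_ne_top.2 ⟨measure_ne_top _ _, measure_ne_top _ _⟩)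
    ((measure_mono h).trans (measure_union_le _ _))

lemma stmt19_aux_mono {X : Ω → ℝ} {s t : ℝ} (hst : s ≤ t) :
    (ℙ {ω | |X ω| ≤ s}).toReal ≤ (ℙ {ω | |X ω| ≤ t}).toReal :=
  ENNReal.toReal_mono (measure_ne_top _ _)
    (measure_mono fun ω hω => le_trans hω hst)

/-- Small tails. -/
lemma stmt19_aux_tail {E : Type*} [NormedAddCommGroup E] [MeasurableSpace E]
    [OpensMeasurableSpace E] {V : Ω → E} (hV : Measurable V) {ε : ℝ} (hε : 0 < ε) :
    ∃ M : ℝ, 0 < M ∧ (ℙ {ω | M < ‖V ω‖}).toReal < ε := by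
  set s : ℕ → Set Ω := fun n => {ω | (n : ℝ) < ‖V ω‖} with hs
  have hmeas : ∀ n, NullMeasurableSet (s n) ℙ := fun n =>
    (measurableSet_lt measurable_const hV.norm).nullMeasurableSet
  have hmono : Antitone s := by
    intro n m hnm ω hω
    simp only [hs, mem_setOf_eq] at hω ⊢
    exact lt_of_le_of_lt (by exact_mod_cast hnm) hω
  have hI : ⋂ n, s n = (∅ : Set Ω) := by
    ext ω
    simp only [mem_iInter, mem_setOf_eq, mem_empty_iff_false, iff_false, not_forall, not_lt, hs]
    exact exists_nat_ge ‖V ω‖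
  have h0 : Tendsto (fun n => (ℙ (s n)).toReal) atTop (𝓝 0) := by
    have := tendsto_measure_iInter_atTop (μ := ℙ) hmeas hmono ⟨0, measure_ne_top _ _⟩
    rw [hI, measure_empty] at this
    simpa [Function.comp_def] using (ENNReal.tendsto_toReal ENNReal.zero_ne_top).comp this
  have := (h0.eventually (gt_mem_nhds hε)).exists
  obtain ⟨n, hn⟩ := this
  refine ⟨(n : ℝ) + 1, by positivity, lt_of_le_of_lt ?_ hn⟩
  refine ENNReal.toReal_mono (measure_ne_top _ _) (measure_mono ?_)
  intro ω hω
  simp only [hs, mem_setOf_eq] at hω ⊢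
  linarith

/-- Continuity in `t` of `t ↦ ℙ(|X| ≤ t)` at a point, for an atomless law. -/
lemma stmt19_aux_t {X : Ω → ℝ} (hX : Measurable X) (h0 : ∀ c : ℝ, ℙ {ω | X ω = c} = 0)
    {t₀ : ℝ} (ht₀ : 0 ≤ t₀) {ε : ℝ} (hε : 0 < ε) :
    ∃ δ : ℝ, 0 < δ ∧
      (ℙ {ω | |X ω| ≤ t₀ + δ}).toReal < (ℙ {ω | |X ω| ≤ t₀}).toReal + ε ∧
      (ℙ {ω | |X ω| ≤ t₀}).toReal - ε < (ℙ {ω | |X ω| ≤ t₀ - δ}).toReal := by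
  have hmeasS : ∀ t : ℝ, NullMeasurableSet {ω | |X ω| ≤ t} ℙ := fun t =>
    (measurableSet_le hX.abs measurable_const).nullMeasurableSet
  -- the boundary is null
  have hnull : ℙ {ω | |X ω| = t₀} = 0 := by
    refine measure_mono_null (fun ω hω => ?_) (measure_union_null (h0 t₀) (h0 (-t₀)))
    rcases (abs_eq ht₀).1 hω with h | h
    · exact Or.inl h
    · exact Or.inr h
  have heq : ℙ {ω | |X ω| < t₀} = ℙ {ω | |X ω| ≤ t₀} := by
    refine le_antisymm (measure_mono (setOf_subset_setOf.2 fun ω hω => le_of_lt hω)) ?_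
    calc ℙ {ω | |X ω| ≤ t₀} ≤ ℙ ({ω | |X ω| < t₀} ∪ {ω | |X ω| = t₀}) := by
          refine measure_mono fun ω hω => ?_
          simp only [mem_setOf_eq] at hω
          rcases lt_or_eq_of_le hω with h | h
          · exact Or.inl h
          · exact Or.inr h
      _ ≤ ℙ {ω | |X ω| < t₀} + ℙ {ω | |X ω| = t₀} := measure_union_le _ _
      _ = ℙ {ω | |X ω| < t₀} := by rw [hnull, add_zero]
  -- right continuity
  have hr : Tendsto (fun n : ℕ => (ℙ {ω | |X ω| ≤ t₀ + 1 / (n + 1)}).toReal) atTop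
      (𝓝 (ℙ {ω | |X ω| ≤ t₀}).toReal) := by
    have hmono : Antitone fun n : ℕ => {ω | |X ω| ≤ t₀ + 1 / ((n : ℝ) + 1)} := by
      intro n m hnm ω hω
      simp only [mem_setOf_eq] at hω ⊢
      have h1 : ((n : ℝ) + 1) ≤ ((m : ℝ) + 1) := by
        have := (Nat.cast_le (α := ℝ)).2 hnm; linarith
      have h2 : 1 / ((m : ℝ) + 1) ≤ 1 / ((n : ℝ) + 1) :=
        one_div_le_one_div_of_le (by positivity) h1
      linarith
    have hI : ⋂ n : ℕ, {ω | |X ω| ≤ t₀ + 1 / ((n : ℝ) + 1)} = {ω | |X ω| ≤ t₀} := by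
      ext ω
      simp only [mem_iInter, mem_setOf_eq]
      constructor
      · intro h
        by_contra hc
        push_neg at hc
        obtain ⟨n, hn⟩ := exists_nat_one_div_lt (sub_pos.2 hc)
        exact absurd (h n) (by push_neg; linarith)
      · intro h n
        have : (0 : ℝ) < 1 / ((n : ℝ) + 1) := by positivity
        linarith
    have := tendsto_measure_iInter_atTop (μ := ℙ) (fun n => hmeasS _) hmono
      ⟨0, measure_ne_top _ _⟩
    rw [hI] at this
    exact (ENNReal.tendsto_toReal (measure_ne_top _ _)).comp this
  -- left continuity
  have hl : Tendsto (fun n : ℕ => (ℙ {ω | |X ω| ≤ t₀ - 1 / (n + 1)}).toReal) atTop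
      (𝓝 (ℙ {ω | |X ω| ≤ t₀}).toReal) := by
    have hmono : Monotone fun n : ℕ => {ω | |X ω| ≤ t₀ - 1 / ((n : ℝ) + 1)} := by
      intro n m hnm ω hω
      simp only [mem_setOf_eq] at hω ⊢
      have h1 : ((n : ℝ) + 1) ≤ ((m : ℝ) + 1) := by
        have := (Nat.cast_le (α := ℝ)).2 hnm; linarith
      have h2 : 1 / ((m : ℝ) + 1) ≤ 1 / ((n : ℝ) + 1) :=
        one_div_le_one_div_of_le (by positivity) h1
      linarith
    have hU : ⋃ n : ℕ, {ω | |X ω| ≤ t₀ - 1 / ((n : ℝ) + 1)} = {ω | |X ω| < t₀} := by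
      ext ω
      simp only [mem_iUnion, mem_setOf_eq]
      constructor
      · rintro ⟨n, hn⟩
        have : (0 : ℝ) < 1 / ((n : ℝ) + 1) := by positivity
        linarith
      · intro h
        obtain ⟨n, hn⟩ := exists_nat_one_div_lt (sub_pos.2 h)
        exact ⟨n, by linarith⟩
    have := tendsto_measure_iUnion_atTop (μ := ℙ) hmono
    rw [hU, heq] at this
    exact (ENNReal.tendsto_toReal (measure_ne_top _ _)).comp this
  have h1 := hr.eventually (gt_mem_nhds (lt_add_of_pos_right _ hε))
  have h2 := hl.eventually (lt_mem_nhds (sub_lt_self _ hε))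
  obtain ⟨n, hn1, hn2⟩ := (h1.and h2).exists
  exact ⟨1 / ((n : ℝ) + 1), by positivity, hn1, hn2⟩

end Aux

/-- Core lemma: joint continuity of the sublevel probability on `H₀ × [0, ∞)`. -/
lemma stmt19_core {Ω : Type*} [MeasurableSpace Ω] (ℙ : Measure Ω) [IsProbabilityMeasure ℙ]
    {K : ℕ} (V : Ω → EuclideanSpace ℝ (Fin (K + 1))) (hV : Measurable V)
    (H₀ : Set (EuclideanSpace ℝ (Fin (K + 1))))
    (hatom : ∀ u ∈ H₀, ∀ c : ℝ, ℙ {ω | ⟪u, V ω⟫ = c} = 0) :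
    ContinuousOn
      (fun q : EuclideanSpace ℝ (Fin (K + 1)) × ℝ => (ℙ {ω | |⟪q.1, V ω⟫| ≤ q.2}).toReal)
      (H₀ ×ˢ Ici 0) := by
  rw [Metric.continuousOn_iff]
  rintro ⟨u₀, t₀⟩ ⟨hu₀, ht₀⟩ ε hε
  dsimp only at hu₀ ht₀ ⊢
  have hε3 : 0 < ε / 3 := by linarith
  obtain ⟨M, hM, hMε⟩ := stmt19_aux_tail (ℙ := ℙ) hV hε3
  have hXmeas : Measurable fun ω => ⟪u₀, V ω⟫ := measurable_const.inner hV
  obtain ⟨δ, hδ, hδ1, hδ2⟩ := stmt19_aux_t hXmeas (hatom u₀ hu₀) ht₀ hε3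
  refine ⟨min (δ / (2 * M)) (δ / 2), by positivity, ?_⟩
  rintro ⟨u, t⟩ ⟨hu, ht⟩ hdist
  dsimp only at hu ht hdist ⊢
  rw [Prod.dist_eq, max_lt_iff] at hdist
  obtain ⟨hd1, hd2⟩ := hdist
  have hd1' : dist u u₀ < δ / (2 * M) := lt_of_lt_of_le hd1 (min_le_left _ _)
  have hd2' : |t - t₀| < δ / 2 := lt_of_lt_of_le (by rwa [Real.dist_eq] at hd2) (min_le_right _ _)
  have habs := abs_lt.1 hd2'
  set d : ℝ := dist u u₀ with hdd
  have hd0 : 0 ≤ d := dist_nonneg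
  have hdM : d * M < δ / 2 := by
    calc d * M < (δ / (2 * M)) * M := by
          exact mul_lt_mul_of_pos_right hd1' hM
      _ = δ / 2 := by field_simp
  -- key inclusion
  have key : ∀ (a b : EuclideanSpace ℝ (Fin (K + 1))) (s : ℝ), dist a b = d →
      {ω | |⟪a, V ω⟫| ≤ s} ⊆ {ω | |⟪b, V ω⟫| ≤ s + d * M} ∪ {ω | M < ‖V ω‖} := by
    intro a b s hab ω hω
    by_cases hVω : M < ‖V ω‖
    · exact Or.inr hVω
    · left
      push_neg at hVω
      have h1 : ⟪b, V ω⟫ = ⟪a, V ω⟫ + ⟪b - a, V ω⟫ := by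
        rw [inner_sub_left]; ring
      have h2 : |⟪b - a, V ω⟫| ≤ ‖b - a‖ * ‖V ω‖ := abs_real_inner_le_norm _ _
      have h3 : ‖b - a‖ = d := by rw [← dist_eq_norm, dist_comm, hab]
      have h4 : ‖b - a‖ * ‖V ω‖ ≤ d * M := by
        rw [h3]; exact mul_le_mul_of_nonneg_left hVω hd0
      calc |⟪b, V ω⟫| ≤ |⟪a, V ω⟫| + |⟪b - a, V ω⟫| := by rw [h1]; exact abs_add_le _ _
        _ ≤ s + d * M := add_le_add hω (le_trans h2 h4)
  -- upper bound
  have hub : (ℙ {ω | |⟪u, V ω⟫| ≤ t}).toReal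
      ≤ (ℙ {ω | |⟪u₀, V ω⟫| ≤ t₀}).toReal + 2 * (ε / 3) := by
    calc (ℙ {ω | |⟪u, V ω⟫| ≤ t}).toReal
        ≤ (ℙ {ω | |⟪u₀, V ω⟫| ≤ t + d * M}).toReal + (ℙ {ω | M < ‖V ω‖}).toReal :=
          stmt19_aux_toReal_le (key u u₀ t hdd.symm)
      _ ≤ (ℙ {ω | |⟪u₀, V ω⟫| ≤ t₀ + δ}).toReal + (ℙ {ω | M < ‖V ω‖}).toReal := by
          have hle : t + d * M ≤ t₀ + δ := by linarith [habs.2]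
          exact add_le_add_left
            (stmt19_aux_mono (X := fun ω => (⟪u₀, V ω⟫ : ℝ)) hle) _
      _ ≤ (ℙ {ω | |⟪u₀, V ω⟫| ≤ t₀}).toReal + ε / 3 + ε / 3 := by
          have := hδ1
          have := hMε
          linarith
      _ = (ℙ {ω | |⟪u₀, V ω⟫| ≤ t₀}).toReal + 2 * (ε / 3) := by ring
  -- lower bound
  have hlb : (ℙ {ω | |⟪u₀, V ω⟫| ≤ t₀}).toReal - 2 * (ε / 3)
      ≤ (ℙ {ω | |⟪u, V ω⟫| ≤ t}).toReal := by
    have hincl : {ω | |⟪u₀, V ω⟫| ≤ t - d * M} ⊆ {ω | |⟪u, V ω⟫| ≤ t} ∪ {ω | M < ‖V ω‖} := by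
      have := key u₀ u (t - d * M) ((dist_comm u₀ u).trans hdd.symm)
      simpa using this
    have h5 : (ℙ {ω | |⟪u₀, V ω⟫| ≤ t - d * M}).toReal
        ≤ (ℙ {ω | |⟪u, V ω⟫| ≤ t}).toReal + (ℙ {ω | M < ‖V ω‖}).toReal :=
      stmt19_aux_toReal_le hincl
    have h6 : (ℙ {ω | |⟪u₀, V ω⟫| ≤ t₀ - δ}).toReal
        ≤ (ℙ {ω | |⟪u₀, V ω⟫| ≤ t - d * M}).toReal :=
      stmt19_aux_mono (by linarith)
    have := hδ2
    have := hMε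
    linarith
  rw [Real.dist_eq, abs_lt]
  constructor <;> linarith

/-- Continuity of the sublevel probability `(u,t) ↦ P(|⟨u,V⟩| ≤ t)` on `H₀ × (0,∞)` and of
`t ↦ sup_{u ∈ H₀} P(|⟨u,V⟩| ≤ t)` on `[0,∞)`, for atomless laws `⟨u,V⟩`. -/
theorem stmt19 {Ω : Type*} [MeasurableSpace Ω] (ℙ : Measure Ω) [IsProbabilityMeasure ℙ]
    {K : ℕ} (V : Ω → EuclideanSpace ℝ (Fin (K + 1))) (hV : Measurable V)
    (H₀ : Set (EuclideanSpace ℝ (Fin (K + 1)))) (hcomp : IsCompact H₀)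
    (hatom : ∀ u ∈ H₀, ∀ c : ℝ, ℙ {ω | ⟪u, V ω⟫ = c} = 0)
    (F : EuclideanSpace ℝ (Fin (K + 1)) → ℝ → ℝ)
    (hFdef : F = fun u t => (ℙ {ω | |⟪u, V ω⟫| ≤ t}).toReal) :
    ContinuousOn (fun q : EuclideanSpace ℝ (Fin (K + 1)) × ℝ => F q.1 q.2) (H₀ ×ˢ Ioi 0)
    ∧ ContinuousOn (fun t => ⨆ u : H₀, F (u : EuclideanSpace ℝ (Fin (K + 1))) t)
        (Ici (0:ℝ)) := by
  subst hFdef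
  have hA := stmt19_core ℙ V hV H₀ hatom
  constructor
  · exact hA.mono (prod_mono_right Ioi_subset_Ici_self)
  · rcases eq_empty_or_nonempty H₀ with h | h
    · subst h
      simp only [Real.iSup_of_isEmpty]
      exact continuousOn_const
    · haveI : Nonempty H₀ := h.to_subtype
      have hbdd : ∀ s : ℝ, BddAbove (range fun u : H₀ => (ℙ {ω | |⟪(u : EuclideanSpace ℝ (Fin (K + 1))), V ω⟫| ≤ s}).toReal) := by
        intro s
        refine ⟨1, ?_⟩
        rintro x ⟨u, rfl⟩
        have h1 : ℙ {ω | |⟪(u : EuclideanSpace ℝ (Fin (K + 1))), V ω⟫| ≤ s} ≤ 1 := prob_le_one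
        calc (ℙ {ω | |⟪(u : EuclideanSpace ℝ (Fin (K + 1))), V ω⟫| ≤ s}).toReal ≤ (1 : ℝ≥0∞).toReal :=
              ENNReal.toReal_mono ENNReal.one_ne_top h1
          _ = 1 := ENNReal.toReal_one
      intro t₀ ht₀
      simp only [mem_Ici] at ht₀
      rw [Metric.continuousWithinAt_iff]
      intro ε hε
      -- uniform continuity on a compact slab
      set S := H₀ ×ˢ Icc (0 : ℝ) (t₀ + 1) with hS
      have hScomp : IsCompact S := hcomp.prod isCompact_Icc
      have hUC := hScomp.uniformContinuousOn_of_continuous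
        (hA.mono (prod_mono_right Icc_subset_Ici_self))
      rw [Metric.uniformContinuousOn_iff] at hUC
      obtain ⟨δ, hδ, hUC⟩ := hUC (ε / 2) (by linarith)
      refine ⟨min δ 1, by positivity, fun t htI hdist => ?_⟩
      simp only [mem_Ici] at htI
      have hdδ : dist t t₀ < δ := lt_of_lt_of_le hdist (min_le_left _ _)
      have hd1 : dist t t₀ < 1 := lt_of_lt_of_le hdist (min_le_right _ _)
      have htmem : t ∈ Icc (0 : ℝ) (t₀ + 1) := by
        constructor
        · exact htI
        · have := abs_lt.1 (by rwa [Real.dist_eq] at hd1)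
          linarith [this.2]
      have ht₀mem : t₀ ∈ Icc (0 : ℝ) (t₀ + 1) := ⟨ht₀, by linarith⟩
      have hkey : ∀ u : H₀, |(ℙ {ω | |⟪(u : EuclideanSpace ℝ (Fin (K + 1))), V ω⟫| ≤ t}).toReal
          - (ℙ {ω | |⟪(u : EuclideanSpace ℝ (Fin (K + 1))), V ω⟫| ≤ t₀}).toReal| < ε / 2 := by
        intro u
        have h1 : ((u : EuclideanSpace ℝ (Fin (K + 1))), t) ∈ S := ⟨u.2, htmem⟩
        have h2 : ((u : EuclideanSpace ℝ (Fin (K + 1))), t₀) ∈ S := ⟨u.2, ht₀mem⟩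
        have h3 : dist ((u : EuclideanSpace ℝ (Fin (K + 1))), t)
            ((u : EuclideanSpace ℝ (Fin (K + 1))), t₀) < δ := by
          rw [Prod.dist_eq]
          simp only [dist_self]
          rw [max_lt_iff]
          exact ⟨hδ, hdδ⟩
        have := hUC _ h1 _ h2 h3
        rwa [Real.dist_eq] at this
      -- compare the sups
      have hsup1 : (⨆ u : H₀, (ℙ {ω | |⟪(u : EuclideanSpace ℝ (Fin (K + 1))), V ω⟫| ≤ t}).toReal)
          ≤ (⨆ u : H₀, (ℙ {ω | |⟪(u : EuclideanSpace ℝ (Fin (K + 1))), V ω⟫| ≤ t₀}).toReal) + ε / 2 := by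
        refine ciSup_le fun u => ?_
        have h1 := (abs_lt.1 (hkey u)).2
        have h2 : (ℙ {ω | |⟪(u : EuclideanSpace ℝ (Fin (K + 1))), V ω⟫| ≤ t₀}).toReal
            ≤ ⨆ u : H₀, (ℙ {ω | |⟪(u : EuclideanSpace ℝ (Fin (K + 1))), V ω⟫| ≤ t₀}).toReal := le_ciSup (hbdd t₀) u
        linarith
      have hsup2 : (⨆ u : H₀, (ℙ {ω | |⟪(u : EuclideanSpace ℝ (Fin (K + 1))), V ω⟫| ≤ t₀}).toReal)
          ≤ (⨆ u : H₀, (ℙ {ω | |⟪(u : EuclideanSpace ℝ (Fin (K + 1))), V ω⟫| ≤ t}).toReal) + ε / 2 := by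
        refine ciSup_le fun u => ?_
        have h1 := (abs_lt.1 (hkey u)).1
        have h2 : (ℙ {ω | |⟪(u : EuclideanSpace ℝ (Fin (K + 1))), V ω⟫| ≤ t}).toReal
            ≤ ⨆ u : H₀, (ℙ {ω | |⟪(u : EuclideanSpace ℝ (Fin (K + 1))), V ω⟫| ≤ t}).toReal := le_ciSup (hbdd t) u
        linarith
      rw [Real.dist_eq, abs_lt]
      constructor <;> linarith
end
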